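/- arXiv:1602.03963 — 2 statements merged into one kernel-verified Lean document; each statement's English description precedes it below -/
import Mathlib

section
/- Assume the interaction graph G = (V, I) is acyclic. Then w_{{i,j}} > 0 for every edge {i,j} ∈ I. -/
open Finset

/-- The sigmoid function `σ(t) = eᵗ/(1+eᵗ)`. -/
noncomputable def sigmoid (t : ℝ) : ℝ := Real.exp t / (1 + Real.exp t)

/-- Interpretation of a Boolean as `±1 ∈ ℝ`. -/
def pm (b : Bool) : ℝ := if b then 1 else -1

/-- `Σ_{{i,j}∈E} β_{{i,j}} x_i x_j`, summed over unordered pairs of distinct indices. -/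
noncomputable def fld (d : ℕ) (β : Fin d → Fin d → ℝ) (x : Fin d → Bool) : ℝ :=
  ∑ i : Fin d, ∑ j ∈ Finset.Ioi i, β i j * pm (x i) * pm (x j)

/-- `Pr(y = s·(+1) | x_V ∈ A)`.  Since the covariates are i.i.d. uniform on `{−1,+1}`
and `Pr(y = s | x_V = x) = σ(s · Σ β x_i x_j)`, this conditional probability equals
`(Σ_{x∈A} σ(s · fld x)) / |A|`. -/
noncomputable def condProbY (d : ℕ) (β : Fin d → Fin d → ℝ) (s : ℝ)
    (A : Finset (Fin d → Bool)) : ℝ :=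
  (∑ x ∈ A, sigmoid (s * fld d β x)) / A.card

open scoped Classical in
/-- The influence `w_e = |2·Pr(y = +1 | x_i = +1, x_j = +1) − 1|` for `e = {i,j}`. -/
noncomputable def wgt (d : ℕ) (β : Fin d → Fin d → ℝ) (e : Sym2 (Fin d)) : ℝ :=
  |2 * condProbY d β 1 (Finset.univ.filter (fun x => ∀ v ∈ e, x v = true)) - 1|

/-- The interaction graph `G = (V, I)` with `I = {{i,j} : β_{{i,j}} ≠ 0}`. -/
def interGraph (d : ℕ) (β : Fin d → Fin d → ℝ) : SimpleGraph (Fin d) :=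
  SimpleGraph.fromRel (fun i j => β i j ≠ 0)

/-! ### Auxiliary material -/

/-- `g(t) = 2σ(t) − 1 = tanh(t/2)`. -/
noncomputable def ggAux (t : ℝ) : ℝ := 2 * sigmoid t - 1

lemma ggAux_add_pos {x y : ℝ} (h : 0 < x + y) : 0 < ggAux x + ggAux y := by
  have hx := Real.exp_pos x
  have hy := Real.exp_pos y
  have hD : 0 < (1 + Real.exp x) * (1 + Real.exp y) := by positivity
  have key : ggAux x + ggAux y
      = 2 * (Real.exp x * Real.exp y - 1) / ((1 + Real.exp x) * (1 + Real.exp y)) := by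
    unfold ggAux sigmoid
    field_simp
    ring
  have hnum : (1 : ℝ) < Real.exp x * Real.exp y := by
    rw [← Real.exp_add]
    exact Real.one_lt_exp_iff.mpr h
  rw [key]
  apply div_pos (by linarith) hD

lemma ggAux_add_neg {x y : ℝ} (h : x + y < 0) : ggAux x + ggAux y < 0 := by
  have hx := Real.exp_pos x
  have hy := Real.exp_pos y
  have hD : 0 < (1 + Real.exp x) * (1 + Real.exp y) := by positivity
  have key : ggAux x + ggAux y
      = 2 * (Real.exp x * Real.exp y - 1) / ((1 + Real.exp x) * (1 + Real.exp y)) := by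
    unfold ggAux sigmoid
    field_simp
    ring
  have hnum : Real.exp x * Real.exp y < 1 := by
    rw [← Real.exp_add]
    exact Real.exp_lt_one_iff.mpr h
  rw [key]
  exact div_neg_of_neg_of_pos (by linarith) hD

lemma pm_xor (u v : Bool) : pm (xor u v) = -(pm u * pm v) := by
  cases u <;> cases v <;> simp [pm]

lemma acyclicAux_anti {V : Type*} {G H : SimpleGraph V} (hle : H ≤ G) (hG : G.IsAcyclic) :
    H.IsAcyclic := fun _ c hc => hG _ (hc.mapLe hle)

/-- Every forest has a proper 2-coloring. -/
lemma forest_coloring {V : Type*} [Fintype V] (G : SimpleGraph V) (hG : G.IsAcyclic) :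
    ∃ c : V → Bool, ∀ a b, G.Adj a b → c a ≠ c b := by
  classical
  generalize hk : G.edgeSet.ncard = k
  induction k using Nat.strong_induction_on generalizing G with
  | _ k ih =>
  subst hk
  by_cases hbot : ∀ a b, ¬ G.Adj a b
  · exact ⟨fun _ => false, fun a b hab => absurd hab (hbot a b)⟩
  · push_neg at hbot
    obtain ⟨a, b, hab⟩ := hbot
    have hfin : G.edgeSet.Finite := Set.toFinite _
    set G' := G.deleteEdges {s(a, b)} with hG'def
    have hG'a : G'.IsAcyclic := acyclicAux_anti (SimpleGraph.deleteEdges_le _) hG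
    have hE : G'.edgeSet = G.edgeSet \ {s(a, b)} := SimpleGraph.edgeSet_deleteEdges _
    have hlt : G'.edgeSet.ncard < G.edgeSet.ncard := by
      rw [hE]
      refine Set.ncard_lt_ncard ⟨Set.diff_subset, fun hsub => ?_⟩ hfin
      have : s(a, b) ∈ G.edgeSet \ {s(a, b)} := hsub hab
      simp at this
    obtain ⟨c', hc'⟩ := ih _ hlt G' hG'a rfl
    have hbridge : ¬ G'.Reachable a b := by
      have hb := (SimpleGraph.isAcyclic_iff_forall_adj_isBridge.mp hG hab)
      rw [SimpleGraph.isBridge_iff] at hb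
      exact hb
    have hxorne : ∀ u v k : Bool, u ≠ v → xor u k ≠ xor v k := by decide
    refine ⟨fun v => if G'.Reachable b v then xor (c' v) (xor (c' b) (!(c' a))) else c' v, ?_⟩
    intro x y hxy
    by_cases hpair : s(x, y) = s(a, b)
    · have hra : ¬ G'.Reachable b a := fun h => hbridge h.symm
      have hrb : G'.Reachable b b := SimpleGraph.Reachable.refl b
      have hval : ∀ u v : Bool, xor u (xor u (!v)) = !v := by decide
      rcases Sym2.eq_iff.mp hpair with ⟨rfl, rfl⟩ | ⟨rfl, rfl⟩
      · simp only [if_neg hra, if_pos hrb, hval]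
        simp
      · simp only [if_pos hrb, if_neg hra, hval]
        simp
    · have hxy' : G'.Adj x y := by
        rw [hG'def, SimpleGraph.deleteEdges_adj]
        exact ⟨hxy, by simpa using hpair⟩
      have hiff : G'.Reachable b x ↔ G'.Reachable b y :=
        ⟨fun h => h.trans hxy'.reachable, fun h => h.trans hxy'.symm.reachable⟩
      have hne := hc' x y hxy'
      by_cases hr : G'.Reachable b x
      · simp only [if_pos hr, if_pos (hiff.mp hr)]
        exact hxorne _ _ _ hne
      · simp only [if_neg hr, if_neg (fun h => hr (hiff.mpr h))]
        exact hne

/-- A 2-coloring adapted to the edge `{i,j}`: `i`, `j` get `false` and every other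
edge of the interaction graph is bichromatic. -/
lemma coloring_exists (d : ℕ) (β : Fin d → Fin d → ℝ) (hacyc : (interGraph d β).IsAcyclic)
    (i j : Fin d) (hij : i ≠ j) (hβ : β i j ≠ 0) :
    ∃ c : Fin d → Bool, c i = false ∧ c j = false ∧
      ∀ a b, a ≠ b → β a b ≠ 0 → s(a, b) ≠ s(i, j) → c a ≠ c b := by
  classical
  set G := interGraph d β with hGdef
  set G₀ := G.deleteEdges {s(i, j)} with hG₀def
  have hG₀a : G₀.IsAcyclic := acyclicAux_anti (SimpleGraph.deleteEdges_le _) hacyc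
  obtain ⟨c₀, hc₀⟩ := forest_coloring G₀ hG₀a
  have hadjij : G.Adj i j := by
    rw [hGdef, interGraph, SimpleGraph.fromRel_adj]
    exact ⟨hij, Or.inl hβ⟩
  have hbridge : ¬ G₀.Reachable i j := by
    have hb := (SimpleGraph.isAcyclic_iff_forall_adj_isBridge.mp hacyc hadjij)
    rw [SimpleGraph.isBridge_iff] at hb
    exact hb
  -- first flip the component of j so that i and j get the same color, then xor that color away
  set c₁ : Fin d → Bool := fun v =>
    if G₀.Reachable j v then xor (c₀ v) (xor (c₀ j) (c₀ i)) else c₀ v with hc₁def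
  have hri : ¬ G₀.Reachable j i := fun h => hbridge h.symm
  have hc₁i : c₁ i = c₀ i := by simp [hc₁def, hri]
  have hc₁j : c₁ j = c₀ i := by
    simp only [hc₁def, if_pos (SimpleGraph.Reachable.refl j)]
    cases c₀ j <;> cases c₀ i <;> rfl
  have hc₁prop : ∀ a b, G₀.Adj a b → c₁ a ≠ c₁ b := by
    intro a b hab
    have hiff : G₀.Reachable j a ↔ G₀.Reachable j b :=
      ⟨fun h => h.trans hab.reachable, fun h => h.trans hab.symm.reachable⟩
    have hne := hc₀ a b hab
    have hxorne : ∀ u v k : Bool, u ≠ v → xor u k ≠ xor v k := by decide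
    by_cases hr : G₀.Reachable j a
    · simp only [hc₁def, if_pos hr, if_pos (hiff.mp hr)]
      exact hxorne _ _ _ hne
    · simp only [hc₁def, if_neg hr, if_neg (fun h => hr (hiff.mpr h))]
      exact hne
  refine ⟨fun v => xor (c₁ v) (c₀ i), by simp [hc₁i], by simp [hc₁j], ?_⟩
  intro a b hab hβab hpair
  have hadj : G₀.Adj a b := by
    rw [hG₀def, SimpleGraph.deleteEdges_adj]
    refine ⟨?_, by simpa using hpair⟩
    rw [hGdef, interGraph, SimpleGraph.fromRel_adj]
    exact ⟨hab, Or.inl hβab⟩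
  have hne := hc₁prop a b hadj
  have hxorne : ∀ u v k : Bool, u ≠ v → xor u k ≠ xor v k := by decide
  exact hxorne _ _ _ hne

lemma pm_true : pm true = 1 := rfl

/-- Main computation: on the set `A = {x : x i = x j = true}`, flipping the coloring
negates all interaction terms except the `{i,j}` one. -/
lemma fld_flip (d : ℕ) (β : Fin d → Fin d → ℝ) (i j : Fin d) (hij : i < j)
    (c : Fin d → Bool) (hci : c i = false) (hcj : c j = false)
    (hc : ∀ a b, a ≠ b → β a b ≠ 0 → s(a, b) ≠ s(i, j) → c a ≠ c b)
    (x : Fin d → Bool) (hxi : x i = true) (hxj : x j = true) :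
    fld d β (fun v => xor (x v) (c v)) = 2 * β i j - fld d β x := by
  have key : fld d β (fun v => xor (x v) (c v)) + fld d β x = 2 * β i j := by
    unfold fld
    rw [← Finset.sum_add_distrib]
    have hterm : ∀ a : Fin d,
        (∑ b ∈ Finset.Ioi a, β a b * pm (xor (x a) (c a)) * pm (xor (x b) (c b))
          + ∑ b ∈ Finset.Ioi a, β a b * pm (x a) * pm (x b))
        = ∑ b ∈ Finset.Ioi a, (if b = j ∧ a = i then 2 * β i j else 0) := by
      intro a
      rw [← Finset.sum_add_distrib]
      refine Finset.sum_congr rfl fun b hb => ?_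
      have hab : a < b := Finset.mem_Ioi.mp hb
      by_cases hcase : b = j ∧ a = i
      · obtain ⟨rfl, rfl⟩ := hcase
        rw [if_pos ⟨rfl, rfl⟩]
        simp [hxi, hxj, hci, hcj, pm]
        ring
      · rw [if_neg hcase]
        by_cases hβab : β a b = 0
        · rw [hβab]; ring
        · have hpair : s(a, b) ≠ s(i, j) := by
            intro h
            rcases Sym2.eq_iff.mp h with ⟨rfl, rfl⟩ | ⟨rfl, rfl⟩
            · exact hcase ⟨rfl, rfl⟩
            · exact absurd (hab.trans hij) (lt_irrefl a)
          have hcab : c a ≠ c b := hc a b (ne_of_lt hab) hβab hpair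
          have h1 : pm (xor (x a) (c a)) = -(pm (x a) * pm (c a)) := pm_xor _ _
          have h2 : pm (xor (x b) (c b)) = -(pm (x b) * pm (c b)) := pm_xor _ _
          have h3 : pm (c a) * pm (c b) = -1 := by
            cases ha' : c a <;> cases hb' : c b <;> simp_all [pm]
          rw [h1, h2]
          have : β a b * -(pm (x a) * pm (c a)) * -(pm (x b) * pm (c b))
              = β a b * pm (x a) * pm (x b) * (pm (c a) * pm (c b)) := by ring
          rw [this, h3]
          ring
    calc (∑ a : Fin d, (∑ b ∈ Finset.Ioi a,
            β a b * pm (xor (x a) (c a)) * pm (xor (x b) (c b))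
          + ∑ b ∈ Finset.Ioi a, β a b * pm (x a) * pm (x b)))
        = ∑ a : Fin d, ∑ b ∈ Finset.Ioi a, (if b = j ∧ a = i then 2 * β i j else 0) :=
          Finset.sum_congr rfl fun a _ => hterm a
      _ = 2 * β i j := by
          have h1 : ∀ a : Fin d, (∑ b ∈ Finset.Ioi a, (if b = j ∧ a = i then 2 * β i j else 0))
              = if a = i then 2 * β i j else 0 := by
            intro a
            by_cases ha : a = i
            · subst ha
              simp only [eq_self_iff_true, and_true, if_true]
              rw [Finset.sum_ite_eq' (Finset.Ioi a) j (fun _ => 2 * β a j)]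
              simp [Finset.mem_Ioi.mpr hij]
            · simp [ha]
          rw [Finset.sum_congr rfl fun a _ => h1 a,
            Finset.sum_ite_eq' Finset.univ i (fun _ => 2 * β i j)]
          simp
  linarith

/-- The heart of the theorem, for `i < j`. -/
lemma key_lemma (d : ℕ) (β : Fin d → Fin d → ℝ) (i j : Fin d) (hij : i < j)
    (hβ : β i j ≠ 0) (hacyc : (interGraph d β).IsAcyclic)
    (A : Finset (Fin d → Bool)) (hmem : ∀ x, x ∈ A ↔ (x i = true ∧ x j = true)) :
    0 < |2 * condProbY d β 1 A - 1| := by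
  classical
  obtain ⟨c, hci, hcj, hc⟩ := coloring_exists d β hacyc i j (ne_of_lt hij) hβ
  have hAne : A.Nonempty := ⟨fun _ => true, (hmem _).mpr ⟨rfl, rfl⟩⟩
  have hcard : (0 : ℝ) < A.card := by
    exact_mod_cast Finset.card_pos.mpr hAne
  set ψ : (Fin d → Bool) → (Fin d → Bool) := fun x v => xor (x v) (c v) with hψdef
  have hψA : ∀ x ∈ A, ψ x ∈ A := by
    intro x hx
    obtain ⟨h1, h2⟩ := (hmem x).mp hx
    exact (hmem _).mpr ⟨by simp [hψdef, h1, hci], by simp [hψdef, h2, hcj]⟩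
  have hψψ : ∀ x, ψ (ψ x) = x := by
    intro x; funext v; simp [hψdef]
  have hfldψ : ∀ x ∈ A, fld d β (ψ x) = 2 * β i j - fld d β x := by
    intro x hx
    obtain ⟨h1, h2⟩ := (hmem x).mp hx
    exact fld_flip d β i j hij c hci hcj hc x h1 h2
  set S : ℝ := ∑ x ∈ A, ggAux (fld d β x) with hSdef
  have hrw : 2 * condProbY d β 1 A - 1 = S / A.card := by
    unfold condProbY
    rw [hSdef]
    have : ∑ x ∈ A, ggAux (fld d β x)
        = 2 * (∑ x ∈ A, sigmoid (1 * fld d β x)) - A.card := by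
      simp only [ggAux, one_mul, Finset.sum_sub_distrib, Finset.sum_const, Finset.mul_sum,
        nsmul_eq_mul, mul_one]
    rw [this]
    field_simp
  have hreindex : S = ∑ x ∈ A, ggAux (2 * β i j - fld d β x) := by
    rw [hSdef]
    refine Finset.sum_nbij' ψ ψ hψA hψA (fun a _ => hψψ a) (fun a _ => hψψ a) ?_
    intro a ha
    rw [hfldψ a ha, sub_sub_cancel]
  have h2S : 2 * S = ∑ x ∈ A, (ggAux (fld d β x) + ggAux (2 * β i j - fld d β x)) := by
    rw [Finset.sum_add_distrib, ← hSdef, ← hreindex]; ring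
  have hSne : S ≠ 0 := by
    rcases lt_or_gt_of_ne hβ with hneg | hpos
    · have : 2 * S < 0 := by
        rw [h2S]
        refine Finset.sum_neg (fun x _ => ggAux_add_neg (by linarith)) hAne
      intro h; rw [h] at this; norm_num at this
    · have : 0 < 2 * S := by
        rw [h2S]
        refine Finset.sum_pos (fun x _ => ggAux_add_pos (by linarith)) hAne
      intro h; rw [h] at this; norm_num at this
  rw [hrw]
  exact abs_pos.mpr (div_ne_zero hSne (ne_of_gt hcard))

/-- Proposition 2, Direct influence: if the interaction graph is acyclic,
then `w_{{i,j}} > 0` for every edge `{i,j} ∈ I`. -/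
theorem statement1 (d : ℕ) (hd : 2 ≤ d) (β : Fin d → Fin d → ℝ)
    (hsymm : ∀ i j, β i j = β j i)
    (hacyc : (interGraph d β).IsAcyclic)
    (i j : Fin d) (hij : i ≠ j) (hβ : β i j ≠ 0) :
    0 < wgt d β s(i, j) := by
  classical
  unfold wgt
  have hmem : ∀ x : Fin d → Bool,
      (x ∈ Finset.univ.filter (fun x => ∀ v ∈ (s(i, j) : Sym2 (Fin d)), x v = true))
        ↔ (x i = true ∧ x j = true) := by
    intro x
    rw [Finset.mem_filter]
    constructor
    · intro ⟨_, h⟩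
      exact ⟨h i (by simp), h j (by simp)⟩
    · rintro ⟨h1, h2⟩
      refine ⟨Finset.mem_univ _, fun v hv => ?_⟩
      rcases Sym2.mem_iff.mp hv with rfl | rfl
      · exact h1
      · exact h2
  rcases lt_or_gt_of_ne hij with h | h
  · exact key_lemma d β i j h hβ hacyc _ (by convert hmem using 3)
  · have hβ' : β j i ≠ 0 := by rw [← hsymm]; exact hβ
    have hswap : (s(i, j) : Sym2 (Fin d)) = s(j, i) := Sym2.eq_swap
    rw [hswap]
    refine key_lemma d β j i h hβ' hacyc _ ?_
    intro x
    rw [← hswap]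
    rw [hmem x]
    tauto
end

section
/- Assume that each connected component of the interaction graph G = (V, I) is a star (a tree in which at most one vertex has degree greater than one). Then for any two distinct i, j ∈ V, we have {i,j} ∈ I if and only if w_{{i,j}} > 0. -/
open Finset

/-- Each connected component of `G` is a star: `G` is acyclic (each component is a tree) and
in each component at most one vertex has degree greater than one. -/
def IsUnionOfStars {V : Type*} (G : SimpleGraph V) : Prop :=
  G.IsAcyclic ∧ ∀ u v : V, G.Reachable u v →
    1 < (G.neighborSet u).ncard → 1 < (G.neighborSet v).ncard → u = v

/-! ### Auxiliary analytic lemmas -/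

lemma sigmoid_pair (a b c : ℝ) (h : a + b = 2*c) :
    (2 * sigmoid a - 1) + (2 * sigmoid b - 1)
      = (Real.exp (2*c) - 1) * (2 / ((1 + Real.exp a) * (1 + Real.exp b))) := by
  have ha : (0:ℝ) < 1 + Real.exp a := by positivity
  have hb : (0:ℝ) < 1 + Real.exp b := by positivity
  rw [← h, Real.exp_add]
  unfold sigmoid
  field_simp
  ring

lemma sum_pairing {α : Type*} [DecidableEq α] (A : Finset α) (hA : A.Nonempty)
    (φ : α → α) (hφA : ∀ x ∈ A, φ x ∈ A) (hinv : ∀ x ∈ A, φ (φ x) = x)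
    (f : α → ℝ) (c : ℝ) (hf : ∀ x ∈ A, f (φ x) = 2*c - f x) :
    ((∑ x ∈ A, (2 * sigmoid (f x) - 1)) = 0 ↔ c = 0) := by
  have hswap : ∀ g : α → ℝ, ∑ x ∈ A, g (φ x) = ∑ x ∈ A, g x := by
    intro g
    exact Finset.sum_nbij' (i := φ) (j := φ) hφA hφA hinv hinv (fun x hx => rfl)
  have h2 : 2 * (∑ x ∈ A, (2 * sigmoid (f x) - 1)) = (Real.exp (2*c) - 1) *
      ∑ x ∈ A, (2 / ((1 + Real.exp (f x)) * (1 + Real.exp (f (φ x))))) := by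
    have e1 : 2 * (∑ x ∈ A, (2 * sigmoid (f x) - 1))
        = ∑ x ∈ A, ((2 * sigmoid (f x) - 1) + (2 * sigmoid (f (φ x)) - 1)) := by
      rw [Finset.sum_add_distrib, hswap (fun x => 2 * sigmoid (f x) - 1)]
      ring
    rw [e1, Finset.mul_sum]
    exact Finset.sum_congr rfl (fun x hx =>
      sigmoid_pair (f x) (f (φ x)) c (by rw [hf x hx]; ring))
  have hP : 0 < ∑ x ∈ A, (2 / ((1 + Real.exp (f x)) * (1 + Real.exp (f (φ x))))) :=
    Finset.sum_pos (fun x hx => by positivity) hA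
  constructor
  · intro h0
    rw [h0, mul_zero] at h2
    rcases mul_eq_zero.mp h2.symm with h | h
    · have h1 : Real.exp (2*c) = Real.exp 0 := by rw [Real.exp_zero]; linarith
      have := Real.exp_eq_exp.mp h1
      linarith
    · exact absurd h (ne_of_gt hP)
  · intro h0
    have hz : Real.exp (2*c) - 1 = 0 := by rw [h0]; simp
    rw [hz, zero_mul] at h2
    linarith

/-! ### The flip identity -/

lemma pm_xor_s3 (a b : Bool) : pm (xor a b) = pm (!a) * pm b := by
  cases a <;> cases b <;> simp [pm]

lemma flip_fld (d : ℕ) (β : Fin d → Fin d → ℝ) (g x : Fin d → Bool)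
    (i' j' : Fin d) (hlt : i' < j') (hx : x i' = true) (hx' : x j' = true)
    (H1 : ∀ u v : Fin d, u < v → β u v ≠ 0 → ¬(u = i' ∧ v = j') → g u ≠ g v)
    (H2 : g i' = g j') :
    fld d β (fun v => xor (g v) (x v)) = 2 * β i' j' - fld d β x := by
  rw [eq_sub_iff_add_eq]
  unfold fld
  show (∑ u : Fin d, ∑ v ∈ Ioi u, β u v * pm (xor (g u) (x u)) * pm (xor (g v) (x v)))
        + (∑ u : Fin d, ∑ v ∈ Ioi u, β u v * pm (x u) * pm (x v)) = 2 * β i' j'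
  have key : ∀ u : Fin d, ((∑ v ∈ Ioi u, β u v * pm (xor (g u) (x u)) * pm (xor (g v) (x v)))
      + ∑ v ∈ Ioi u, β u v * pm (x u) * pm (x v))
      = ∑ v ∈ Ioi u, (if u = i' ∧ v = j' then 2 * β i' j' else 0) := by
    intro u
    rw [← Finset.sum_add_distrib]
    refine Finset.sum_congr rfl (fun v hv => ?_)
    have huv : u < v := Finset.mem_Ioi.mp hv
    rw [pm_xor_s3, pm_xor_s3]
    by_cases hc : u = i' ∧ v = j'
    · obtain ⟨rfl, rfl⟩ := hc
      rw [if_pos ⟨rfl, rfl⟩, hx, hx', ← H2]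
      cases g u <;> simp [pm] <;> ring
    · rw [if_neg hc]
      by_cases hβ : β u v = 0
      · simp [hβ]
      · have hne := H1 u v huv hβ hc
        cases hgu : g u <;> cases hgv : g v <;>
          first
            | (exfalso; rw [hgu, hgv] at hne; exact hne rfl)
            | (cases hxu : x u <;> cases hxv : x v <;> simp [pm, hxu, hxv] <;> ring)
  calc (∑ u : Fin d, ∑ v ∈ Ioi u, β u v * pm (xor (g u) (x u)) * pm (xor (g v) (x v)))
        + ∑ u : Fin d, ∑ v ∈ Ioi u, β u v * pm (x u) * pm (x v)
      = ∑ u : Fin d, ∑ v ∈ Ioi u, (if u = i' ∧ v = j' then 2 * β i' j' else 0) := by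
        rw [← Finset.sum_add_distrib]
        exact Finset.sum_congr rfl (fun u _ => key u)
    _ = ∑ u : Fin d, (if u = i' then 2 * β i' j' else 0) := by
        refine Finset.sum_congr rfl (fun u _ => ?_)
        by_cases hu : u = i'
        · subst hu
          simp only [true_and, if_pos]
          rw [Finset.sum_ite_eq' (Ioi u) j' (fun _ => 2 * β u j')]
          rw [if_pos (Finset.mem_Ioi.mpr hlt)]
        · simp [hu]
    _ = 2 * β i' j' := by
        rw [Finset.sum_ite_eq' Finset.univ i' (fun _ => 2 * β i' j')]
        simp

/-! ### Graph-theoretic lemmas about unions of stars -/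

section Graph
variable {V : Type*} [Fintype V] (G : SimpleGraph V) [LinearOrder V]

/-- `v` has two distinct neighbors. -/
def TwoN (v : V) : Prop := ∃ a b : V, a ≠ b ∧ G.Adj v a ∧ G.Adj v b

/-- `v` is a "center": it has two distinct neighbors, or it is the smaller endpoint of an
isolated edge. -/
def Center (v : V) : Prop :=
  TwoN G v ∨ ∃ u, G.Adj v u ∧ (∀ w, G.Adj u w → w = v) ∧ v < u

variable {G}

omit [LinearOrder V] in
lemma twoN_ncard {v : V} (h : TwoN G v) : 1 < (G.neighborSet v).ncard := by
  obtain ⟨a, b, hab, ha, hb⟩ := h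
  exact (Set.one_lt_ncard (Set.toFinite _)).mpr ⟨a, ha, b, hb, hab⟩

omit [LinearOrder V] in
lemma not_twoN_both (hstar : IsUnionOfStars G) {u v : V} (huv : G.Adj u v)
    (hu : TwoN G u) (hv : TwoN G v) : False :=
  G.ne_of_adj huv (hstar.2 u v huv.reachable (twoN_ncard hu) (twoN_ncard hv))

lemma not_twoN_solo (hstar : IsUnionOfStars G) {u v : V} (huv : G.Adj u v)
    (hu : TwoN G u) (hv : ∃ w, G.Adj v w ∧ (∀ z, G.Adj w z → z = v) ∧ v < w) : False := by
  obtain ⟨w, hvw, hwonly, _⟩ := hv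
  by_cases hwu : w = u
  · subst hwu
    obtain ⟨a, b, hab, ha, hb⟩ := hu
    exact hab ((hwonly a ha).trans (hwonly b hb).symm)
  · exact not_twoN_both hstar huv hu ⟨u, w, Ne.symm hwu, huv.symm, hvw⟩

lemma center_not_both (hstar : IsUnionOfStars G) {u v : V} (huv : G.Adj u v)
    (hu : Center G u) (hv : Center G v) : False := by
  rcases hu with hu | hu
  · rcases hv with hv | hv
    · exact not_twoN_both hstar huv hu hv
    · exact not_twoN_solo hstar huv hu hv
  · rcases hv with hv | hv
    · exact not_twoN_solo hstar huv.symm hv hu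
    · obtain ⟨a, hua, haonly, hulta⟩ := hu
      obtain ⟨b, hvb, hbonly, hvltb⟩ := hv
      by_cases hav : a = v
      · subst hav
        have hbu : b = u := haonly b hvb
        subst hbu
        exact absurd hvltb (lt_asymm hulta)
      · exact not_twoN_solo hstar huv ⟨v, a, Ne.symm hav, huv, hua⟩ ⟨b, hvb, hbonly, hvltb⟩

omit [Fintype V] in
lemma center_at_least_one {u v : V} (huv : G.Adj u v) : Center G u ∨ Center G v := by
  by_cases hu : TwoN G u
  · exact Or.inl (Or.inl hu)
  by_cases hv : TwoN G v
  · exact Or.inr (Or.inl hv)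
  have huonly : ∀ w, G.Adj u w → w = v := by
    intro w hw
    by_contra hne
    exact hu ⟨w, v, hne, hw, huv⟩
  have hvonly : ∀ w, G.Adj v w → w = u := by
    intro w hw
    by_contra hne
    exact hv ⟨w, u, hne, hw, huv.symm⟩
  rcases lt_or_gt_of_ne (G.ne_of_adj huv) with h | h
  · exact Or.inl (Or.inr ⟨v, huv, hvonly, h⟩)
  · exact Or.inr (Or.inr ⟨u, huv.symm, huonly, h⟩)

lemma center_iff_not (hstar : IsUnionOfStars G) {u v : V} (huv : G.Adj u v) :
    Center G u ↔ ¬ Center G v := by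
  constructor
  · intro hu hv; exact center_not_both hstar huv hu hv
  · intro hv
    rcases center_at_least_one huv with h | h
    · exact h
    · exact absurd h hv

omit [Fintype V] in
lemma leaf_only_nbr {l c : V} (hlc : G.Adj l c) (hl : ¬ Center G l) :
    ∀ w, G.Adj l w → w = c := by
  intro w hw
  by_contra hne
  exact hl (Or.inl ⟨w, c, hne, hw, hlc⟩)

lemma not_center_of_reach_not_adj (hstar : IsUnionOfStars G) {i j : V}
    (hreach : G.Reachable i j) (hnadj : ¬ G.Adj i j) (hne : i ≠ j) :
    ¬ Center G j := by
  intro hc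
  obtain ⟨w⟩ := hreach.symm
  have hp := w.toPath
  set p := w.toPath with hpdef
  clear_value p
  obtain ⟨q, hq⟩ := p
  match q with
  | SimpleGraph.Walk.nil => exact hne rfl
  | SimpleGraph.Walk.cons h SimpleGraph.Walk.nil => exact hnadj (h.symm)
  | SimpleGraph.Walk.cons (v := b) h (SimpleGraph.Walk.cons (v := c) h' q') =>
    have hnodup := hq.support_nodup
    have hjc : j ≠ c := by
      simp only [SimpleGraph.Walk.support_cons, List.nodup_cons] at hnodup
      intro hjc
      exact hnodup.1 (by rw [hjc]; simp [SimpleGraph.Walk.start_mem_support])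
    have htwob : TwoN G b := ⟨j, c, hjc, h.symm, h'⟩
    rcases hc with hc | hc
    · exact not_twoN_both hstar h hc htwob
    · exact not_twoN_solo hstar h.symm htwob hc
end Graph

/-- assuming `i < j`. -/
lemma statement3_aux (d : ℕ) (β : Fin d → Fin d → ℝ)
    (hsymm : ∀ i j, β i j = β j i)
    (hstar : IsUnionOfStars (interGraph d β))
    (i j : Fin d) (hlt : i < j) :
    β i j ≠ 0 ↔ 0 < wgt d β s(i, j) := by
  classical
  have hij : i ≠ j := ne_of_lt hlt
  set G := interGraph d β with hGdef
  have hadj : ∀ u v : Fin d, G.Adj u v ↔ u ≠ v ∧ β u v ≠ 0 := by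
    intro u v
    rw [hGdef]
    unfold interGraph
    rw [SimpleGraph.fromRel_adj]
    constructor
    · rintro ⟨hne, h | h⟩
      · exact ⟨hne, h⟩
      · exact ⟨hne, by rw [hsymm]; exact h⟩
    · rintro ⟨hne, h⟩
      exact ⟨hne, Or.inl h⟩
  -- construct the coloring
  have hgex : ∃ g : Fin d → Bool, g i = false ∧ g j = false ∧
      ∀ u v, G.Adj u v → ¬((u = i ∧ v = j) ∨ (u = j ∧ v = i)) → g u ≠ g v := by
    by_cases hβ : β i j = 0
    · -- i and j are not adjacent
      have hnadj : ¬ G.Adj i j := fun h => ((hadj i j).mp h).2 hβ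
      refine ⟨fun v => xor (decide (Center G v))
          (xor (decide (G.Reachable v i) && decide (Center G i))
               (decide (G.Reachable v j) && decide (Center G j))), ?_, ?_, ?_⟩
      · -- g i = false
        have hrii : decide (G.Reachable i i) = true := decide_eq_true (SimpleGraph.Reachable.refl i)
        by_cases hrij : G.Reachable i j
        · have hcj : ¬ Center G j := not_center_of_reach_not_adj hstar hrij hnadj hij
          simp [hrii, hrij, hcj]
        · simp [hrii, hrij]
      · -- g j = false
        have hrjj : decide (G.Reachable j j) = true := decide_eq_true (SimpleGraph.Reachable.refl j)
        by_cases hrji : G.Reachable j i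
        · have hci : ¬ Center G i := not_center_of_reach_not_adj hstar hrji
            (fun h => hnadj h.symm) (Ne.symm hij)
          simp [hrjj, hrji, hci]
        · simp [hrjj, hrji]
      · -- edges are bichromatic
        intro u v huv _
        have hRi : G.Reachable u i ↔ G.Reachable v i :=
          ⟨fun h => huv.symm.reachable.trans h, fun h => huv.reachable.trans h⟩
        have hRj : G.Reachable u j ↔ G.Reachable v j :=
          ⟨fun h => huv.symm.reachable.trans h, fun h => huv.reachable.trans h⟩
        have hC : Center G u ↔ ¬ Center G v := center_iff_not hstar huv
        beta_reduce
        have hRi' : decide (G.Reachable u i) = decide (G.Reachable v i) :=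
          decide_eq_decide.mpr hRi
        have hRj' : decide (G.Reachable u j) = decide (G.Reachable v j) :=
          decide_eq_decide.mpr hRj
        rw [hRi', hRj']
        by_cases hcv : Center G v
        · have hcu : ¬ Center G u := fun h => hC.mp h hcv
          simp [hcv, hcu]
        · simp [hcv, hC.mpr hcv]
    · -- i and j are adjacent
      have hAdj : G.Adj i j := (hadj i j).mpr ⟨hij, hβ⟩
      have hone : Center G i ↔ ¬ Center G j := center_iff_not hstar hAdj
      by_cases hci : Center G i
      · have hcj : ¬ Center G j := hone.mp hci
        have hleaf : ∀ w, G.Adj j w → w = i := leaf_only_nbr hAdj.symm hcj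
        refine ⟨fun v => !(xor (decide (Center G v)) (decide (v = j))), ?_, ?_, ?_⟩
        · simp [hci, hij]
        · simp [hcj]
        · intro u v huv hpair
          have hunej : u ≠ j := by
            rintro rfl
            exact hpair (Or.inr ⟨rfl, hleaf v huv⟩)
          have hvnej : v ≠ j := by
            rintro rfl
            exact hpair (Or.inl ⟨hleaf u huv.symm, rfl⟩)
          have hC : Center G u ↔ ¬ Center G v := center_iff_not hstar huv
          by_cases hcv : Center G v
          · have hcu : ¬ Center G u := fun h => hC.mp h hcv
            simp [hunej, hvnej, hcv, hcu]
          · simp [hunej, hvnej, hcv, hC.mpr hcv]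
      · have hcj : Center G j := not_not.mp (fun h => hci ((center_iff_not hstar hAdj).mpr h))
        have hleaf : ∀ w, G.Adj i w → w = j := leaf_only_nbr hAdj hci
        refine ⟨fun v => !(xor (decide (Center G v)) (decide (v = i))), ?_, ?_, ?_⟩
        · simp [hci]
        · simp [hcj, Ne.symm hij]
        · intro u v huv hpair
          have hunei : u ≠ i := by
            rintro rfl
            exact hpair (Or.inl ⟨rfl, hleaf v huv⟩)
          have hvnei : v ≠ i := by
            rintro rfl
            exact hpair (Or.inr ⟨hleaf u huv.symm, rfl⟩)
          have hC : Center G u ↔ ¬ Center G v := center_iff_not hstar huv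
          by_cases hcv : Center G v
          · have hcu : ¬ Center G u := fun h => hC.mp h hcv
            simp [hunei, hvnei, hcv, hcu]
          · simp [hunei, hvnei, hcv, hC.mpr hcv]
  obtain ⟨g, hgi, hgj, hgedge⟩ := hgex
  -- the conditioning event
  set A : Finset (Fin d → Bool) := Finset.univ.filter (fun x => ∀ v ∈ s(i,j), x v = true)
    with hAdef
  have hmem : ∀ x : Fin d → Bool, x ∈ A ↔ (x i = true ∧ x j = true) := by
    intro x
    rw [hAdef]
    simp only [Finset.mem_filter, Finset.mem_univ, true_and]
    constructor
    · intro h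
      exact ⟨h i (by simp), h j (by simp)⟩
    · rintro ⟨h1, h2⟩ v hv
      rcases Sym2.mem_iff.mp hv with rfl | rfl <;> assumption
  have hAne : A.Nonempty := ⟨fun _ => true, (hmem _).mpr ⟨rfl, rfl⟩⟩
  -- the involution
  set φ : (Fin d → Bool) → (Fin d → Bool) := fun x v => xor (g v) (x v) with hφdef
  have hφA : ∀ x ∈ A, φ x ∈ A := by
    intro x hx
    obtain ⟨h1, h2⟩ := (hmem x).mp hx
    refine (hmem (φ x)).mpr ⟨?_, ?_⟩
    · show xor (g i) (x i) = true
      rw [hgi, h1]; rfl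
    · show xor (g j) (x j) = true
      rw [hgj, h2]; rfl
  have hinv : ∀ x ∈ A, φ (φ x) = x := by
    intro x _
    funext v
    show xor (g v) (xor (g v) (x v)) = x v
    cases g v <;> cases x v <;> rfl
  have hfl : ∀ x ∈ A, fld d β (φ x) = 2 * β i j - fld d β x := by
    intro x hx
    obtain ⟨h1, h2⟩ := (hmem x).mp hx
    refine flip_fld d β g x i j hlt h1 h2 ?_ (hgi.trans hgj.symm)
    intro u v huv hβuv hpair
    refine hgedge u v ((hadj u v).mpr ⟨ne_of_lt huv, hβuv⟩) ?_
    rintro (⟨rfl, rfl⟩ | ⟨rfl, rfl⟩)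
    · exact hpair ⟨rfl, rfl⟩
    · exact absurd (lt_trans huv hlt) (lt_irrefl _)
  have key := sum_pairing A hAne φ hφA hinv (fld d β) (β i j) hfl
  -- final computation
  have hNpos : (0:ℝ) < A.card := by
    exact_mod_cast Finset.card_pos.mpr hAne
  have hrw : 2 * condProbY d β 1 A - 1
      = (∑ x ∈ A, (2 * sigmoid (fld d β x) - 1)) / A.card := by
    unfold condProbY
    rw [Finset.sum_sub_distrib, Finset.sum_const, ← Finset.mul_sum]
    simp only [one_mul, nsmul_eq_mul, mul_one]
    field_simp
  have hwgt : wgt d β s(i,j) = |(∑ x ∈ A, (2 * sigmoid (fld d β x) - 1)) / A.card| := by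
    unfold wgt
    rw [← hAdef, hrw]
  rw [hwgt]
  constructor
  · intro hβ0
    have hsum : (∑ x ∈ A, (2 * sigmoid (fld d β x) - 1)) ≠ 0 := fun h => hβ0 (key.mp h)
    have : (∑ x ∈ A, (2 * sigmoid (fld d β x) - 1)) / A.card ≠ 0 :=
      div_ne_zero hsum (ne_of_gt hNpos)
    exact abs_pos.mpr this
  · intro hpos hβ0
    rw [key.mpr hβ0] at hpos
    simp at hpos

/-- Theorem 1, Union of stars: if each connected component of the
interaction graph is a star, then `{i,j} ∈ I` iff `w_{{i,j}} > 0`. -/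
theorem statement3 (d : ℕ) (hd : 2 ≤ d) (β : Fin d → Fin d → ℝ)
    (hsymm : ∀ i j, β i j = β j i)
    (hstar : IsUnionOfStars (interGraph d β))
    (i j : Fin d) (hij : i ≠ j) :
    β i j ≠ 0 ↔ 0 < wgt d β s(i, j) := by
  rcases lt_or_gt_of_ne hij with hlt | hlt
  · exact statement3_aux d β hsymm hstar i j hlt
  · rw [hsymm i j, Sym2.eq_swap]
    exact statement3_aux d β hsymm hstar j i hlt
end
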